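/- Let R be a commutative F_q-algebra and f(X) ∈ R[X] a polynomial such that f(x+y) = f(x) + f(y) and f(λx) = λf(x) hold identically (as polynomial identities in R[X,Y], resp. for all λ ∈ F_q). Then every coefficient a_i of f with index i not a power of q vanishes, i.e., f(X) = Σ a_{q^n} X^{q^n}. -/
import Mathlib

open Polynomial

private theorem aux_comp_coeff {R : Type*} [CommRing R] (f : R[X]) (c : R) (i : ℕ) :
    (f.comp (C c * X)).coeff i = c ^ i * f.coeff i := by
  rw [comp, eval₂_eq_sum, Polynomial.sum, finset_sum_coeff]
  simp only [mul_pow, ← C_pow, ← mul_assoc, ← C_mul, coeff_C_mul, coeff_X_pow, mul_ite,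
    mul_zero, mul_one]
  simp only [eq_comm (a := i)]
  rw [Finset.sum_ite_eq' f.support i]
  split_ifs with h
  · ring
  · simp [Polynomial.notMem_support_iff.mp h]

private theorem aux_add {R : Type*} [CommRing R] (f : R[X])
    (hadd : Polynomial.aeval
        ((MvPolynomial.X 0 + MvPolynomial.X 1 : MvPolynomial (Fin 2) R)) f =
      Polynomial.aeval (MvPolynomial.X 0 : MvPolynomial (Fin 2) R) f +
        Polynomial.aeval (MvPolynomial.X 1 : MvPolynomial (Fin 2) R) f)
    (i j : ℕ) (hj : 0 < j) (hji : j < i) :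
    (i.choose j : R) * f.coeff i = 0 := by
  have hij : i - j ≠ 0 := Nat.sub_ne_zero_of_lt hji
  have h := congrArg (MvPolynomial.aeval (R := R) ![(X : (R[X])[X]), C X]) hadd
  simp only [map_add, ← Polynomial.aeval_algHom_apply, MvPolynomial.aeval_X,
    Matrix.cons_val_zero, Matrix.cons_val_one, Matrix.head_cons] at h
  have h2 := congrArg (fun P => (Polynomial.coeff P j).coeff (i - j)) h
  simp only [aeval_def, eval₂_eq_sum, coeff_add, coeff_sum, Polynomial.sum_def,
    Polynomial.algebraMap_apply, Algebra.algebraMap_self, RingHom.id_apply, map_id,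
    finset_sum_coeff, coeff_C_mul, ← C_pow, coeff_C, hj.ne', if_neg, hij,
    coeff_X_add_C_pow, coeff_X_pow, mul_ite, mul_zero, mul_one, ite_self,
    Finset.sum_const_zero, add_zero, if_false,
    apply_ite (fun p : R[X] => Polynomial.coeff p (i - j)), coeff_zero,
    coeff_mul_natCast] at h2
  rw [Finset.sum_eq_single i] at h2
  · by_cases hs : i ∈ f.support
    · rw [mul_comm]; simpa using h2
    · simp [Polynomial.notMem_support_iff.mp hs]
  · intro b _ hbi
    rcases le_or_gt j b with hbj | hbj
    · simp [show ¬ (i - j = b - j) from by omega]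
    · simp [Nat.choose_eq_zero_of_lt hbj]
  · intro hs; simp [Polynomial.notMem_support_iff.mp hs]

private theorem aux_choose {p : ℕ} (hp : p.Prime) : ∀ i, 2 ≤ i → (∀ k, i ≠ p ^ k) →
    ∃ j, 0 < j ∧ j < i ∧ ¬ p ∣ i.choose j := by
  have : Fact p.Prime := ⟨hp⟩
  intro i
  induction i using Nat.strong_induction_on with
  | _ i ih =>
    intro h2 hnp
    by_cases hdvd : p ∣ i
    · obtain ⟨i', rfl⟩ := hdvd
      have hp2 := hp.two_le
      have hi'0 : i' ≠ 0 := by rintro rfl; omega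
      have hi' : 2 ≤ i' := by
        rcases Nat.lt_or_ge i' 2 with h | h
        · interval_cases i'
          · omega
          · exact absurd (hnp 1) (by simp)
        · exact h
      have hnp' : ∀ k, i' ≠ p ^ k := by
        rintro k rfl
        exact hnp (k + 1) (by rw [pow_succ'])
      obtain ⟨j', hj0, hj1, hj2⟩ := ih i' (by nlinarith) hi' hnp'
      refine ⟨p * j', by positivity, by nlinarith, ?_⟩
      intro hdv
      apply hj2
      have hcong := Choose.choose_modEq_choose_mod_mul_choose_div_nat
        (p := p) (n := p * i') (k := p * j')
      rw [Nat.mul_mod_right, Nat.mul_mod_right, Nat.mul_div_cancel_left _ hp.pos,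
        Nat.mul_div_cancel_left _ hp.pos, Nat.choose_self, one_mul] at hcong
      have := (Nat.modEq_zero_iff_dvd.mpr hdv).symm.trans hcong
      exact Nat.modEq_zero_iff_dvd.mp this.symm
    · refine ⟨1, one_pos, by omega, by simpa [Nat.choose_one_right] using hdvd⟩

/-- An additive, `F_q`-linear polynomial over a commutative
`F_q`-algebra `R` has all its coefficients supported on `q`-power indices. -/
theorem additive_linear_poly_coeffs
    (Fq : Type*) [Field Fq] [Fintype Fq] (q : ℕ) (hq : q = Fintype.card Fq)
    (R : Type*) [CommRing R] [Algebra Fq R] (f : R[X])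
    (hadd : Polynomial.aeval
        ((MvPolynomial.X 0 + MvPolynomial.X 1 : MvPolynomial (Fin 2) R)) f =
      Polynomial.aeval (MvPolynomial.X 0 : MvPolynomial (Fin 2) R) f +
        Polynomial.aeval (MvPolynomial.X 1 : MvPolynomial (Fin 2) R) f)
    (hlin : ∀ l : Fq,
      f.comp (Polynomial.C (algebraMap Fq R l) * Polynomial.X) =
        Polynomial.C (algebraMap Fq R l) * f) :
    ∀ i : ℕ, (∀ n : ℕ, i ≠ q ^ n) → f.coeff i = 0 := by
  intro i hi
  -- a cancellation helper
  have hcancel : ∀ (u : Fq), u ≠ 0 → ∀ a : R, algebraMap Fq R u * a = 0 → a = 0 := by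
    intro u hu a ha
    have : algebraMap Fq R u⁻¹ * (algebraMap Fq R u * a) = a := by
      rw [← mul_assoc, ← map_mul, inv_mul_cancel₀ hu, map_one, one_mul]
    rw [ha, mul_zero] at this
    exact this.symm
  -- the linearity coefficient identity
  have hcoeff : ∀ c : Fq, algebraMap Fq R (c ^ i - c) * f.coeff i = 0 := by
    intro c
    have h := congrArg (fun g => Polynomial.coeff g i) (hlin c)
    simp only [aux_comp_coeff, coeff_C_mul] at h
    rw [map_sub, sub_mul, map_pow, h, sub_self]
  -- characteristic facts
  obtain ⟨m, hp, hqm⟩ := FiniteField.card Fq (ringChar Fq)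
  set p := ringChar Fq with hpdef
  rw [← hq] at hqm
  rcases Nat.eq_zero_or_pos i with rfl | hi0
  · -- i = 0
    have h := hcoeff 0
    simpa using h
  have hi1 : i ≠ 1 := fun h => hi 0 (by simp [h])
  have hi2 : 2 ≤ i := by omega
  by_cases hpk : ∀ k, i ≠ p ^ k
  · -- i is not a power of p : use additivity
    obtain ⟨j, hj0, hj1, hj2⟩ := aux_choose hp i hi2 hpk
    have hu : (i.choose j : Fq) ≠ 0 := by
      rwa [Ne, CharP.cast_eq_zero_iff Fq p]
    have h := aux_add f hadd i j hj0 hj1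
    rw [← map_natCast (algebraMap Fq R) (i.choose j)] at h
    exact hcancel _ hu _ h
  · -- i = p ^ k
    push_neg at hpk
    obtain ⟨k, rfl⟩ := hpk
    have hk0 : k ≠ 0 := by rintro rfl; simp at hi2
    have hmk : ¬ (m : ℕ) ∣ k := by
      rintro ⟨t, rfl⟩
      exact hi t (by rw [hqm, ← pow_mul])
    set r := k % (m : ℕ) with hr
    have hr0 : 0 < r := Nat.pos_of_ne_zero fun h => hmk (Nat.dvd_of_mod_eq_zero h)
    have hrm : r < (m : ℕ) := Nat.mod_lt _ m.pos
    have hp1 : 1 < p ^ r := Nat.one_lt_pow hr0.ne' hp.one_lt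
    -- find λ with λ ^ p ^ r ≠ λ
    have hexists : ∃ l : Fq, l ^ p ^ r ≠ l := by
      by_contra hall
      push_neg at hall
      have hne := FiniteField.X_pow_card_sub_X_ne_zero (K' := Fq) hp1
      apply hne
      apply Polynomial.eq_zero_of_natDegree_lt_card_of_eval_eq_zero _ (f := id)
        Function.injective_id
      · intro l
        simp [hall l]
      · rw [FiniteField.X_pow_card_sub_X_natDegree_eq _ hp1, ← hq]
        calc p ^ r < p ^ (m : ℕ) := Nat.pow_lt_pow_right hp.one_lt hrm
        _ = q := hqm.symm
    obtain ⟨l, hl⟩ := hexists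
    -- l ^ p ^ k = l ^ p ^ r
    have hk2 : p ^ k = q ^ (k / (m : ℕ)) * p ^ r := by
      rw [hqm, ← pow_mul, ← pow_add]
      congr 1
      rw [hr]
      exact (Nat.div_add_mod k (m : ℕ)).symm
    have hpow : l ^ p ^ k = l ^ p ^ r := by
      rw [hk2, pow_mul, hq, FiniteField.pow_card_pow]
    have h := hcoeff l
    rw [hpow] at h
    exact hcancel _ (sub_ne_zero_of_ne hl) _ h
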